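/- For finitely supported real sequences b = {b_I}, β = {β_J}, independent uniform ±1 random signs σ = {σ_J}, and any φ ∈ L²(ℝ), E ‖P^{0,1}_b (P^{σ,0,1}_β φ)‖_2² = Σ_{J∈𝒟} ⟨φ, h¹_J⟩² · (β_J²/|J|) · Σ_{I∈𝒟, I⊊J} b_I² |I|. -/

import Mathlib

open MeasureTheory ProbabilityTheory Real Filter
open scoped ENNReal

attribute [local instance] Classical.propDecidable

noncomputable section

namespace RandomParaproducts

/-- Dyadic intervals: `(n, k)` represents `[k·2ⁿ, (k+1)·2ⁿ)`. -/
abbrev D : Type := ℤ × ℤ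

/-- The length `2ⁿ` of the dyadic interval `(n, k)`. -/
def len (I : D) : ℝ := (2 : ℝ) ^ I.1

/-- The dyadic interval `[k·2ⁿ, (k+1)·2ⁿ)` as a subset of `ℝ`. -/
def ival (I : D) : Set ℝ := Set.Ico ((I.2 : ℝ) * (2 : ℝ) ^ I.1) (((I.2 : ℝ) + 1) * (2 : ℝ) ^ I.1)

/-- The left half of a dyadic interval. -/
def lc (I : D) : D := (I.1 - 1, 2 * I.2)

/-- The right half of a dyadic interval. -/
def rc (I : D) : D := (I.1 - 1, 2 * I.2 + 1)

/-- The `L²`-normalized Haar function `h_I = h⁰_I`. -/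
def haar (I : D) : ℝ → ℝ := fun x =>
  (Real.sqrt (len I))⁻¹ *
    ((ival (rc I)).indicator (fun _ => (1 : ℝ)) x - (ival (lc I)).indicator (fun _ => (1 : ℝ)) x)

/-- The function `h¹_I = |h_I| = |I|^{-1/2} 1_I`. -/
def haar1 (I : D) : ℝ → ℝ := fun x =>
  (Real.sqrt (len I))⁻¹ * (ival I).indicator (fun _ => (1 : ℝ)) x

/-- `h^ε_I`, where `false` codes the exponent `0` and `true` codes the exponent `1`. -/
def hfun : Bool → D → ℝ → ℝ
  | false => haar
  | true => haar1

/-- The inner product `⟨f, g⟩ = ∫ f g` on `L²(ℝ)`. -/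
def ip (f g : ℝ → ℝ) : ℝ := ∫ x, f x * g x

/-- The paraproduct `P^{ε,δ}_b f = ∑_I b_I ⟨f, h^δ_I⟩ h^ε_I` with finitely supported
numerical symbol `b`. -/
def P (e d : Bool) (b : D →₀ ℝ) (f : ℝ → ℝ) : ℝ → ℝ := fun x =>
  ∑ I ∈ b.support, b I * ip f (hfun d I) * hfun e I x

/-- The signed paraproduct `P^{σ,ε,δ}_b f = ∑_I σ_I b_I ⟨f, h^δ_I⟩ h^ε_I`. -/
def Psig (σ : D → ℝ) (e d : Bool) (b : D →₀ ℝ) (f : ℝ → ℝ) : ℝ → ℝ := fun x =>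
  ∑ I ∈ b.support, σ I * (b I * ip f (hfun d I) * hfun e I x)

/-- The square of the `L²(ℝ)` norm, `‖g‖₂² = ∫ g²`. -/
def l2normSq (g : ℝ → ℝ) : ℝ := ∫ x, (g x) ^ 2

/-- The Carleson norm of a sequence `a` whose nonzero entries lie in the finite set `s`:
`sup_J (|J|⁻¹ ∑_{I ⊆ J} a_I² |I|)^{1/2}`. -/
def carlOn (s : Finset D) (a : D → ℝ) : ℝ :=
  ⨆ J : D, Real.sqrt ((len J)⁻¹ *
    ∑ I ∈ s.filter (fun I => ival I ⊆ ival J), (a I) ^ 2 * len I)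

/-- `μ` is the law of independent uniformly distributed random signs `{σ_I : I ∈ 𝒟}`. -/
def IsSignMeasure (μ : Measure (D → ℝ)) : Prop :=
  IsProbabilityMeasure μ ∧
    iIndepFun (m := fun _ : D => (inferInstance : MeasurableSpace ℝ)) (fun I σ => σ I) μ ∧
    ∀ I : D, μ.map (fun σ => σ I) =
      (2⁻¹ : ℝ≥0∞) • (Measure.dirac (1 : ℝ) + Measure.dirac (-1 : ℝ))

/-- `f` is a unit vector of `L²(ℝ)`. -/
def UnitL2 (f : ℝ → ℝ) : Prop := MemLp f 2 volume ∧ eLpNorm f 2 volume = 1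

/-- The operator norm on `L²(ℝ)` of a map defined on functions. -/
def opNorm (T : (ℝ → ℝ) → ℝ → ℝ) : ℝ :=
  ⨆ f : {f : ℝ → ℝ // UnitL2 f}, Real.sqrt (l2normSq (T f.1))

/-- The averaged operator norm `sup_{‖f‖₂ = 1} (𝔼 ‖T_σ f‖₂²)^{1/2}`. -/
def avgOpNorm (μ : Measure (D → ℝ)) (T : (D → ℝ) → (ℝ → ℝ) → ℝ → ℝ) : ℝ :=
  ⨆ f : {f : ℝ → ℝ // UnitL2 f}, Real.sqrt (∫ σ, l2normSq (T σ f.1) ∂μ)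

/-- `b` is the finite linear combination of Haar functions with coefficients `c`. -/
def FinHaar (b : ℝ → ℝ) (c : D →₀ ℝ) : Prop :=
  b = fun x => ∑ I ∈ c.support, c I * haar I x

/-- The paraproduct `P^{ε,γ}_{b,α} f = ∑_{I} (⟨b, h^α_I⟩/|I|^{1/2}) ⟨f, h^γ_I⟩ h^ε_I` with
function symbol `b`, the sum extended over a finite set `s` containing all the
nonvanishing terms. -/
def Pb (s : Finset D) (e g a : Bool) (b : ℝ → ℝ) (f : ℝ → ℝ) : ℝ → ℝ := fun x =>
  ∑ I ∈ s, (ip b (hfun a I) / Real.sqrt (len I)) * ip f (hfun g I) * hfun e I x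

lemma measurableSet_ival (I : D) : MeasurableSet (ival I) := measurableSet_Ico

lemma volume_ival_ne_top (I : D) : volume (ival I) ≠ ⊤ := by
  simp only [ival, Real.volume_Ico]; exact ENNReal.ofReal_ne_top

lemma memℒp_haar (I : D) : MemLp (haar I) 2 volume := by
  have h1 : MemLp ((ival (rc I)).indicator (fun _ => (1 : ℝ))) 2 volume :=
    memLp_indicator_const 2 (measurableSet_ival _) 1 (Or.inr (volume_ival_ne_top _))
  have h2 : MemLp ((ival (lc I)).indicator (fun _ => (1 : ℝ))) 2 volume :=
    memLp_indicator_const 2 (measurableSet_ival _) 1 (Or.inr (volume_ival_ne_top _))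
  exact ((h1.sub h2).const_mul ((Real.sqrt (len I))⁻¹))

/-- The Haar function `h_I` as an element of `L²(ℝ)`. -/
def haarLp (I : D) : Lp ℝ 2 (volume : Measure ℝ) := (memℒp_haar I).toLp (haar I)

/-- The random Haar multiplier `T_σ f = ∑_{I ∈ 𝒟} σ_I ⟨f, h_I⟩ h_I`, as an element of
`L²(ℝ)`; the (infinite) sum converges unconditionally in `L²`. -/
def Tfull (σ : D → ℝ) (g : ℝ → ℝ) : Lp ℝ 2 (volume : Measure ℝ) :=
  ∑' I : D, (σ I * ip g (haar I)) • haarLp I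

/-- The composition `M_b T_σ M_β` applied to `f`, as a function. -/
def MbTM (σ : D → ℝ) (b β f : ℝ → ℝ) : ℝ → ℝ := fun x =>
  b x * (Tfull σ fun y => β y * f y) x

/-! ### Auxiliary lemmas -/

section Aux

lemma len_pos (I : D) : 0 < len I := zpow_pos (by norm_num) _

lemma sqrt_len_pos (I : D) : 0 < Real.sqrt (len I) := Real.sqrt_pos.2 (len_pos I)

lemma volume_ival (I : D) : volume (ival I) = ENNReal.ofReal (len I) := by
  rw [ival, Real.volume_Ico]
  congr 1
  unfold len
  ring

lemma mval (I : D) : (volume (ival I)).toReal = len I := by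
  rw [volume_ival, ENNReal.toReal_ofReal (len_pos I).le]

lemma ival_nonempty (I : D) : (ival I).Nonempty := by
  rw [ival]
  refine Set.nonempty_Ico.2 ?_
  have := len_pos I
  unfold len at this
  nlinarith

lemma two_zpow_half (n : ℤ) : (2 : ℝ) ^ (n - 1) = 2 ^ n / 2 := by
  rw [zpow_sub_one₀ (by norm_num : (2:ℝ) ≠ 0)]
  ring

lemma len_lc (I : D) : len (lc I) = len I / 2 := two_zpow_half I.1

lemma len_rc (I : D) : len (rc I) = len I / 2 := two_zpow_half I.1

lemma ival_lc (I : D) :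
    ival (lc I) = Set.Ico ((I.2 : ℝ) * 2 ^ I.1) ((I.2 : ℝ) * 2 ^ I.1 + 2 ^ (I.1 - 1)) := by
  unfold ival lc
  have h := two_zpow_half I.1
  push_cast
  congr 1 <;> (rw [h]; ring)

lemma ival_rc (I : D) :
    ival (rc I) = Set.Ico ((I.2 : ℝ) * 2 ^ I.1 + 2 ^ (I.1 - 1)) (((I.2 : ℝ) + 1) * 2 ^ I.1) := by
  unfold ival rc
  have h := two_zpow_half I.1
  push_cast
  congr 1 <;> (rw [h]; ring)

lemma children_union (I : D) : ival (lc I) ∪ ival (rc I) = ival I := by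
  rw [ival_lc, ival_rc, Set.Ico_union_Ico_eq_Ico, ival]
  · have := len_pos (lc I); rw [len_lc] at this
    unfold len at this
    have h := two_zpow_half I.1
    nlinarith
  · have := len_pos (lc I); rw [len_lc] at this
    unfold len at this
    have h := two_zpow_half I.1
    nlinarith

lemma children_disjoint (I : D) : Disjoint (ival (lc I)) (ival (rc I)) := by
  rw [ival_lc, ival_rc]; exact Set.Ico_disjoint_Ico_same

lemma lc_subset (I : D) : ival (lc I) ⊆ ival I := by
  rw [← children_union I]; exact Set.subset_union_left

lemma rc_subset (I : D) : ival (rc I) ⊆ ival I := by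
  rw [← children_union I]; exact Set.subset_union_right

lemma mval_lc (I : D) : (volume (ival (lc I))).toReal = len I / 2 := by
  rw [mval, len_lc]

lemma mval_rc (I : D) : (volume (ival (rc I))).toReal = len I / 2 := by
  rw [mval, len_rc]

/-- A dyadic interval is contained in its parent. -/
lemma parent_subset (I : D) : ival I ⊆ ival (I.1 + 1, I.2 / 2) := by
  unfold ival
  have h2 : (2 : ℝ) ^ (I.1 + 1) = 2 ^ I.1 * 2 := zpow_add_one₀ (by norm_num) _
  have hp : (0:ℝ) < 2 ^ I.1 := len_pos I
  have k1 : ((2 * (I.2 / 2) : ℤ) : ℝ) ≤ (I.2 : ℝ) := by exact_mod_cast (by omega : 2*(I.2/2) ≤ I.2)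
  have k2 : ((I.2 : ℝ) + 1) ≤ ((2 * (I.2 / 2) + 2 : ℤ) : ℝ) := by
    exact_mod_cast (by omega : I.2 + 1 ≤ 2*(I.2/2) + 2)
  apply Set.Ico_subset_Ico
  · push_cast at k1 ⊢
    rw [h2]
    nlinarith
  · push_cast at k2 ⊢
    rw [h2]
    nlinarith

lemma disjoint_same_level {I J : D} (h1 : I.1 = J.1) (h2 : I.2 ≠ J.2) :
    Disjoint (ival I) (ival J) := by
  have hp : (0:ℝ) < 2 ^ I.1 := len_pos I
  unfold ival
  rw [← h1, Set.Ico_disjoint_Ico]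
  rcases lt_or_gt_of_ne h2 with h | h
  · have : ((I.2 : ℝ) + 1) ≤ (J.2 : ℝ) := by exact_mod_cast (by omega : I.2 + 1 ≤ J.2)
    refine min_le_iff.2 (Or.inl (le_max_iff.2 (Or.inr ?_)))
    nlinarith
  · have : ((J.2 : ℝ) + 1) ≤ (I.2 : ℝ) := by exact_mod_cast (by omega : J.2 + 1 ≤ I.2)
    refine min_le_iff.2 (Or.inr (le_max_iff.2 (Or.inl ?_)))
    nlinarith

lemma subset_or_disjoint_aux (n : ℕ) :
    ∀ I J : D, J.1 = I.1 + n → (ival I ⊆ ival J ∨ Disjoint (ival I) (ival J)) := by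
  induction n with
  | zero =>
    intro I J h
    by_cases h2 : I.2 = J.2
    · left
      have : I = J := Prod.ext (by omega) h2
      rw [this]
    · right; exact disjoint_same_level (by omega) h2
  | succ n ih =>
    intro I J h
    rcases ih (I.1 + 1, I.2 / 2) J (by simp; omega) with hs | hd
    · exact Or.inl ((parent_subset I).trans hs)
    · exact Or.inr (hd.mono_left (parent_subset I))

lemma subset_or_disjoint {I J : D} (h : I.1 ≤ J.1) :
    ival I ⊆ ival J ∨ Disjoint (ival I) (ival J) :=
  subset_or_disjoint_aux (J.1 - I.1).toNat I J (by omega)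

lemma level_le_of_subset {I J : D} (h : ival I ⊆ ival J) : I.1 ≤ J.1 := by
  have hv := measure_mono (μ := volume) h
  rw [volume_ival, volume_ival] at hv
  have : len I ≤ len J :=
    (ENNReal.ofReal_le_ofReal_iff (len_pos J).le).1 hv
  exact (zpow_le_zpow_iff_right₀ (by norm_num : (1:ℝ) < 2)).1 this

lemma not_disjoint_of_subset {I J : D} (h : ival I ⊆ ival J) :
    ¬ Disjoint (ival I) (ival J) := by
  intro hd
  obtain ⟨x, hx⟩ := ival_nonempty I
  exact Set.disjoint_left.1 hd hx (h hx)

lemma ival_inj {I J : D} (h : ival I = ival J) : I = J := by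
  have h1 : I.1 = J.1 :=
    le_antisymm (level_le_of_subset h.le) (level_le_of_subset h.ge)
  by_cases h2 : I.2 = J.2
  · exact Prod.ext h1 h2
  · exact absurd (disjoint_same_level h1 h2) (not_disjoint_of_subset h.le)

lemma level_lt_of_ssubset {I J : D} (h : ival I ⊂ ival J) : I.1 < J.1 := by
  rcases lt_or_eq_of_le (level_le_of_subset h.subset) with hlt | heq
  · exact hlt
  · exfalso
    by_cases h2 : I.2 = J.2
    · exact h.ne (congrArg ival (Prod.ext heq h2))
    · exact not_disjoint_of_subset h.subset (disjoint_same_level heq h2)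

lemma child_of_ssubset {I J : D} (h : ival I ⊂ ival J) :
    ival I ⊆ ival (lc J) ∨ ival I ⊆ ival (rc J) := by
  have hlt : I.1 < J.1 := level_lt_of_ssubset h
  have hl : I.1 ≤ (lc J).1 := by simp [lc]; omega
  have hr : I.1 ≤ (rc J).1 := by simp [rc]; omega
  rcases subset_or_disjoint hl with hs | hd1
  · exact Or.inl hs
  rcases subset_or_disjoint hr with hs | hd2
  · exact Or.inr hs
  exfalso
  obtain ⟨x, hx⟩ := ival_nonempty I
  have hxJ : x ∈ ival J := h.subset hx
  rw [← children_union J] at hxJ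
  rcases hxJ with hxl | hxr
  · exact Set.disjoint_left.1 hd1 hx hxl
  · exact Set.disjoint_left.1 hd2 hx hxr

lemma tri (I J : D) :
    ival I ⊂ ival J ∨ ival J ⊆ ival I ∨ Disjoint (ival I) (ival J) := by
  rcases le_total I.1 J.1 with h | h
  · rcases subset_or_disjoint h with hs | hd
    · rcases eq_or_ne (ival I) (ival J) with he | hne
      · exact Or.inr (Or.inl he.ge)
      · exact Or.inl (ssubset_of_subset_of_ne hs hne)
    · exact Or.inr (Or.inr hd)
  · rcases subset_or_disjoint h with hs | hd
    · exact Or.inr (Or.inl hs)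
    · exact Or.inr (Or.inr hd.symm)

end Aux

section Aux2

lemma indicator_abs_le (S : Set ℝ) (x : ℝ) : |S.indicator (fun _ => (1:ℝ)) x| ≤ 1 := by
  by_cases h : x ∈ S <;> simp [h]

lemma ind_mul_ind (A B : Set ℝ) (x : ℝ) :
    A.indicator (fun _ => (1:ℝ)) x * B.indicator (fun _ => (1:ℝ)) x
      = (A ∩ B).indicator (fun _ => (1:ℝ)) x := by
  by_cases hA : x ∈ A <;> by_cases hB : x ∈ B <;>
    simp [Set.indicator_apply, hA, hB, Set.mem_inter_iff]

lemma integrable_ind (I : D) :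
    Integrable ((ival I).indicator (fun _ => (1:ℝ))) volume :=
  memLp_one_iff_integrable.mp (memLp_indicator_const 1 (measurableSet_ival I) 1
    (Or.inr (volume_ival_ne_top I)))

lemma volume_inter_ne_top (I J : D) : volume (ival I ∩ ival J) ≠ ⊤ :=
  ((measure_mono Set.inter_subset_left).trans_lt
    (lt_top_iff_ne_top.2 (volume_ival_ne_top I))).ne

lemma integrable_ind_mul (I J : D) :
    Integrable (fun x => (ival I).indicator (fun _ => (1:ℝ)) x *
      (ival J).indicator (fun _ => (1:ℝ)) x) volume := by
  simp_rw [ind_mul_ind]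
  exact memLp_one_iff_integrable.mp (memLp_indicator_const 1
    ((measurableSet_ival I).inter (measurableSet_ival J)) 1
    (Or.inr (volume_inter_ne_top I J)))

lemma integral_ind_mul (I J : D) :
    ∫ x, (ival I).indicator (fun _ => (1:ℝ)) x * (ival J).indicator (fun _ => (1:ℝ)) x
      = (volume (ival I ∩ ival J)).toReal := by
  simp_rw [ind_mul_ind]
  exact integral_indicator_one ((measurableSet_ival I).inter (measurableSet_ival J))

lemma ip_haar_haar1 (J I : D) :
    ip (haar J) (haar1 I) = (Real.sqrt (len J))⁻¹ * (Real.sqrt (len I))⁻¹ *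
      ((volume (ival (rc J) ∩ ival I)).toReal - (volume (ival (lc J) ∩ ival I)).toReal) := by
  unfold ip
  have h : ∀ x : ℝ, haar J x * haar1 I x
      = (Real.sqrt (len J))⁻¹ * (Real.sqrt (len I))⁻¹ *
        ((ival (rc J)).indicator (fun _ => (1:ℝ)) x * (ival I).indicator (fun _ => (1:ℝ)) x
         - (ival (lc J)).indicator (fun _ => (1:ℝ)) x * (ival I).indicator (fun _ => (1:ℝ)) x) := by
    intro x; unfold haar haar1; ring
  simp_rw [h]
  rw [MeasureTheory.integral_const_mul,
    integral_sub (integrable_ind_mul (rc J) I) (integrable_ind_mul (lc J) I),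
    integral_ind_mul, integral_ind_mul]

lemma ip_haar_haar_eq (I J : D) :
    ip (haar I) (haar J) = (Real.sqrt (len I))⁻¹ * (Real.sqrt (len J))⁻¹ *
      (((volume (ival (rc I) ∩ ival (rc J))).toReal
          - (volume (ival (rc I) ∩ ival (lc J))).toReal)
        - ((volume (ival (lc I) ∩ ival (rc J))).toReal
          - (volume (ival (lc I) ∩ ival (lc J))).toReal)) := by
  unfold ip
  have h : ∀ x : ℝ, haar I x * haar J x
      = (Real.sqrt (len I))⁻¹ * (Real.sqrt (len J))⁻¹ *
        (((ival (rc I)).indicator (fun _ => (1:ℝ)) x * (ival (rc J)).indicator (fun _ => (1:ℝ)) x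
          - (ival (rc I)).indicator (fun _ => (1:ℝ)) x * (ival (lc J)).indicator (fun _ => (1:ℝ)) x)
         - ((ival (lc I)).indicator (fun _ => (1:ℝ)) x * (ival (rc J)).indicator (fun _ => (1:ℝ)) x
          - (ival (lc I)).indicator (fun _ => (1:ℝ)) x * (ival (lc J)).indicator (fun _ => (1:ℝ)) x)) := by
    intro x; unfold haar; ring
  simp_rw [h]
  have i1 : Integrable (fun x =>
      (ival (rc I)).indicator (fun _ => (1:ℝ)) x * (ival (rc J)).indicator (fun _ => (1:ℝ)) x
      - (ival (rc I)).indicator (fun _ => (1:ℝ)) x * (ival (lc J)).indicator (fun _ => (1:ℝ)) x)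
      volume := (integrable_ind_mul (rc I) (rc J)).sub (integrable_ind_mul (rc I) (lc J))
  have i2 : Integrable (fun x =>
      (ival (lc I)).indicator (fun _ => (1:ℝ)) x * (ival (rc J)).indicator (fun _ => (1:ℝ)) x
      - (ival (lc I)).indicator (fun _ => (1:ℝ)) x * (ival (lc J)).indicator (fun _ => (1:ℝ)) x)
      volume := (integrable_ind_mul (lc I) (rc J)).sub (integrable_ind_mul (lc I) (lc J))
  rw [MeasureTheory.integral_const_mul, integral_sub i1 i2,
    integral_sub (integrable_ind_mul (rc I) (rc J)) (integrable_ind_mul (rc I) (lc J)),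
    integral_sub (integrable_ind_mul (lc I) (rc J)) (integrable_ind_mul (lc I) (lc J)),
    integral_ind_mul, integral_ind_mul, integral_ind_mul, integral_ind_mul]

lemma sqrt_inv_mul_sq (I J : D) (s : ℝ) :
    ((Real.sqrt (len J))⁻¹ * (Real.sqrt (len I))⁻¹ * s)^2 = s^2 / (len J * len I) := by
  rw [mul_pow, mul_pow, inv_pow, inv_pow, Real.sq_sqrt (len_pos J).le,
    Real.sq_sqrt (len_pos I).le]
  field_simp

lemma ip_haar1_zero {I J : D} (h : ¬ ival I ⊂ ival J) : ip (haar J) (haar1 I) = 0 := by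
  rcases tri I J with hss | hsup | hd
  · exact absurd hss h
  · rw [ip_haar_haar1,
      Set.inter_eq_left.2 ((rc_subset J).trans hsup),
      Set.inter_eq_left.2 ((lc_subset J).trans hsup), mval_rc, mval_lc]
    ring
  · rw [ip_haar_haar1,
      (hd.symm.mono_left (rc_subset J)).inter_eq,
      (hd.symm.mono_left (lc_subset J)).inter_eq]
    simp

lemma ip_haar1_sq {I J : D} (h : ival I ⊂ ival J) :
    (ip (haar J) (haar1 I))^2 = len I / len J := by
  have hI := len_pos I; have hJ := len_pos J
  rcases child_of_ssubset h with hc | hc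
  · rw [ip_haar_haar1,
      ((children_disjoint J).symm.mono_right hc).inter_eq,
      Set.inter_eq_right.2 hc, mval, sqrt_inv_mul_sq]
    simp only [measure_empty, ENNReal.toReal_zero]
    field_simp
    ring
  · rw [ip_haar_haar1,
      Set.inter_eq_right.2 hc,
      ((children_disjoint J).mono_right hc).inter_eq, mval, sqrt_inv_mul_sq]
    simp only [measure_empty, ENNReal.toReal_zero]
    field_simp
    ring

lemma ip_haar_self (I : D) : ip (haar I) (haar I) = 1 := by
  have hI := len_pos I
  rw [ip_haar_haar_eq, Set.inter_self, Set.inter_self,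
    (children_disjoint I).symm.inter_eq, (children_disjoint I).inter_eq,
    mval_rc, mval_lc]
  simp only [measure_empty, ENNReal.toReal_zero]
  have hs : Real.sqrt (len I) * Real.sqrt (len I) = len I := Real.mul_self_sqrt hI.le
  have hne : Real.sqrt (len I) ≠ 0 := (sqrt_len_pos I).ne'
  field_simp
  rw [Real.sq_sqrt hI.le]; ring

lemma ip_comm (f g : ℝ → ℝ) : ip f g = ip g f := by
  unfold ip; simp_rw [mul_comm]

lemma ip_haar_orth_ssubset {I J : D} (h : ival I ⊂ ival J) : ip (haar I) (haar J) = 0 := by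
  rcases child_of_ssubset h with hc | hc
  · rw [ip_haar_haar_eq,
      ((children_disjoint J).mono_left ((rc_subset I).trans hc)).inter_eq,
      Set.inter_eq_left.2 ((rc_subset I).trans hc),
      ((children_disjoint J).mono_left ((lc_subset I).trans hc)).inter_eq,
      Set.inter_eq_left.2 ((lc_subset I).trans hc), mval_rc, mval_lc]
    simp only [measure_empty, ENNReal.toReal_zero]
    ring
  · rw [ip_haar_haar_eq,
      Set.inter_eq_left.2 ((rc_subset I).trans hc),
      ((children_disjoint J).symm.mono_left ((rc_subset I).trans hc)).inter_eq,
      Set.inter_eq_left.2 ((lc_subset I).trans hc),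
      ((children_disjoint J).symm.mono_left ((lc_subset I).trans hc)).inter_eq,
      mval_rc, mval_lc]
    simp only [measure_empty, ENNReal.toReal_zero]
    ring

lemma ip_haar_orth {I J : D} (h : I ≠ J) : ip (haar I) (haar J) = 0 := by
  rcases tri I J with hss | hsup | hd
  · exact ip_haar_orth_ssubset hss
  · have : ival J ⊂ ival I :=
      ssubset_of_subset_of_ne hsup (fun he => h (ival_inj he).symm)
    rw [ip_comm]
    exact ip_haar_orth_ssubset this
  · rw [ip_haar_haar_eq,
      (hd.mono (rc_subset I) (rc_subset J)).inter_eq,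
      (hd.mono (rc_subset I) (lc_subset J)).inter_eq,
      (hd.mono (lc_subset I) (rc_subset J)).inter_eq,
      (hd.mono (lc_subset I) (lc_subset J)).inter_eq]
    simp

lemma integrable_haar (I : D) : Integrable (haar I) volume := by
  unfold haar
  exact ((integrable_ind (rc I)).sub (integrable_ind (lc I))).const_mul _

lemma integrable_haar1 (I : D) : Integrable (haar1 I) volume := by
  unfold haar1
  exact (integrable_ind I).const_mul _

lemma haar_bdd (I : D) : ∃ C, ∀ x, ‖haar I x‖ ≤ C := by
  refine ⟨(Real.sqrt (len I))⁻¹ * 2, fun x => ?_⟩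
  unfold haar
  rw [Real.norm_eq_abs, abs_mul]
  have h1 := indicator_abs_le (ival (rc I)) x
  have h2 := indicator_abs_le (ival (lc I)) x
  have h3 : |(ival (rc I)).indicator (fun _ => (1:ℝ)) x - (ival (lc I)).indicator (fun _ => (1:ℝ)) x| ≤ 2 := by
    have := abs_sub ((ival (rc I)).indicator (fun _ => (1:ℝ)) x)
      ((ival (lc I)).indicator (fun _ => (1:ℝ)) x)
    linarith
  have h4 : |(Real.sqrt (len I))⁻¹| = (Real.sqrt (len I))⁻¹ :=
    abs_of_nonneg (inv_nonneg.2 (Real.sqrt_nonneg _))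
  rw [h4]
  exact mul_le_mul_of_nonneg_left h3 (inv_nonneg.2 (Real.sqrt_nonneg _))

lemma integrable_haar_mul (I J : D) : Integrable (fun x => haar I x * haar J x) volume :=
  (integrable_haar J).bdd_mul (integrable_haar I).aestronglyMeasurable
    (c := (haar_bdd I).choose) (ae_of_all _ (haar_bdd I).choose_spec)

lemma integrable_haar_haar1 (J I : D) :
    Integrable (fun x => haar J x * haar1 I x) volume :=
  (integrable_haar1 I).bdd_mul (integrable_haar J).aestronglyMeasurable
    (c := (haar_bdd J).choose) (ae_of_all _ (haar_bdd J).choose_spec)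

lemma l2normSq_sum (s : Finset D) (c : D → ℝ) :
    l2normSq (fun x => ∑ I ∈ s, c I * haar I x) = ∑ I ∈ s, (c I)^2 := by
  unfold l2normSq
  have h : ∀ x : ℝ, (∑ I ∈ s, c I * haar I x)^2
      = ∑ I ∈ s, ∑ J ∈ s, (c I * c J) * (haar I x * haar J x) := by
    intro x
    rw [sq, Finset.sum_mul_sum]
    exact Finset.sum_congr rfl fun I _ => Finset.sum_congr rfl fun J _ => by ring
  simp_rw [h]
  rw [integral_finset_sum _ (fun I _ => integrable_finset_sum _
    (fun J _ => (integrable_haar_mul I J).const_mul _))]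
  refine Finset.sum_congr rfl fun I hI => ?_
  rw [integral_finset_sum _ (fun J _ => (integrable_haar_mul I J).const_mul _)]
  have h2 : ∀ J ∈ s, ∫ x, (c I * c J) * (haar I x * haar J x)
      = (c I * c J) * ip (haar I) (haar J) := fun J _ => MeasureTheory.integral_const_mul _ _
  rw [Finset.sum_congr rfl h2, Finset.sum_eq_single I]
  · rw [ip_haar_self]; ring
  · intro J _ hne
    rw [ip_haar_orth (Ne.symm hne), mul_zero]
  · intro h'; exact absurd hI h'

end Aux2

section Aux3

variable {μ : Measure (D → ℝ)}

lemma sign_ae (hμ : IsSignMeasure μ) (J : D) : ∀ᵐ σ ∂μ, σ J = 1 ∨ σ J = -1 := by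
  obtain ⟨hprob, hind, hlaw⟩ := hμ
  have hmeas : Measurable (fun σ : D → ℝ => σ J) := measurable_pi_apply J
  have hA : MeasurableSet ((({(1:ℝ)} ∪ {(-1:ℝ)} : Set ℝ))ᶜ) :=
    ((measurableSet_singleton 1).union (measurableSet_singleton (-1))).compl
  rw [ae_iff]
  have hset : {σ : D → ℝ | ¬(σ J = 1 ∨ σ J = -1)}
      = (fun σ : D → ℝ => σ J) ⁻¹' ((({(1:ℝ)} ∪ {(-1:ℝ)} : Set ℝ))ᶜ) := by
    ext σ; simp; tauto
  rw [hset, ← Measure.map_apply hmeas hA, hlaw J]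
  have h1 : (1:ℝ) ∉ (({(1:ℝ)} ∪ {(-1:ℝ)} : Set ℝ))ᶜ := by simp
  have h2 : (-1:ℝ) ∉ (({(1:ℝ)} ∪ {(-1:ℝ)} : Set ℝ))ᶜ := by simp
  rw [Measure.smul_apply, Measure.add_apply, Measure.dirac_apply' _ hA,
    Measure.dirac_apply' _ hA, Set.indicator_of_notMem h1, Set.indicator_of_notMem h2]
  simp

lemma sign_bdd (hμ : IsSignMeasure μ) (J : D) : ∀ᵐ σ ∂μ, ‖σ J‖ ≤ 1 := by
  filter_upwards [sign_ae hμ J] with σ h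
  rcases h with h | h <;> simp [h]

lemma integrable_eval_mul (hμ : IsSignMeasure μ) (J K : D) :
    Integrable (fun σ => σ J * σ K) μ := by
  haveI : IsProbabilityMeasure μ := hμ.1
  refine Integrable.mono' (integrable_const 1)
    ((measurable_pi_apply J).mul (measurable_pi_apply K)).aestronglyMeasurable ?_
  filter_upwards [sign_ae hμ J, sign_ae hμ K] with σ h1 h2
  rcases h1 with h | h <;> rcases h2 with h' | h' <;> simp [h, h']

lemma int_dirac {f : ℝ → ℝ} (a : ℝ) : Integrable f (Measure.dirac a) :=
  (integrable_const (f a)).congr (ae_eq_dirac f).symm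

lemma integral_eval (hμ : IsSignMeasure μ) (g : ℝ → ℝ) (hg : Measurable g) (J : D) :
    ∫ σ, g (σ J) ∂μ = (g 1 + g (-1)) / 2 := by
  obtain ⟨hprob, hind, hlaw⟩ := hμ
  have hmeas : Measurable (fun σ : D → ℝ => σ J) := measurable_pi_apply J
  have hgm : AEStronglyMeasurable g (μ.map (fun σ : D → ℝ => σ J)) :=
    hg.aestronglyMeasurable
  rw [← integral_map hmeas.aemeasurable hgm, hlaw J, integral_smul_measure,
    integral_add_measure (int_dirac 1) (int_dirac (-1)), integral_dirac, integral_dirac]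
  simp only [smul_eq_mul, ENNReal.toReal_inv, ENNReal.toReal_ofNat]
  ring

lemma integral_eval_sq (hμ : IsSignMeasure μ) (J : D) : ∫ σ, (σ J)^2 ∂μ = 1 := by
  have h := integral_eval hμ (fun x => x^2) (by measurability) J
  norm_num at h
  exact h

lemma integral_eval_zero (hμ : IsSignMeasure μ) (J : D) : ∫ σ, σ J ∂μ = 0 := by
  have h := integral_eval hμ id measurable_id J
  norm_num at h
  exact h

lemma integral_eval_mul (hμ : IsSignMeasure μ) {J K : D} (h : J ≠ K) :
    ∫ σ, σ J * σ K ∂μ = 0 := by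
  have hind : IndepFun (fun σ : D → ℝ => σ J) (fun σ : D → ℝ => σ K) μ :=
    hμ.2.1.indepFun h
  have hm : ∫ σ, ((fun σ : D → ℝ => σ J) * (fun σ : D → ℝ => σ K)) σ ∂μ
      = (∫ σ, σ J ∂μ) * (∫ σ, σ K ∂μ) :=
    hind.integral_mul_eq_mul_integral (measurable_pi_apply J).aestronglyMeasurable
      (measurable_pi_apply K).aestronglyMeasurable
  simp only [Pi.mul_apply] at hm
  rw [hm, integral_eval_zero hμ, integral_eval_zero hμ, mul_zero]

lemma sq_sum_expand (s : Finset D) (a : D → ℝ) (σ : D → ℝ) :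
    (∑ J ∈ s, σ J * a J)^2 = ∑ J ∈ s, ∑ K ∈ s, (a J * a K) * (σ J * σ K) := by
  rw [sq, Finset.sum_mul_sum]
  exact Finset.sum_congr rfl fun J _ => Finset.sum_congr rfl fun K _ => by ring

lemma integrable_sq_sum (hμ : IsSignMeasure μ) (s : Finset D) (a : D → ℝ) :
    Integrable (fun σ => (∑ J ∈ s, σ J * a J)^2) μ := by
  simp_rw [sq_sum_expand]
  exact integrable_finset_sum _ (fun J _ => integrable_finset_sum _
    (fun K _ => (integrable_eval_mul hμ J K).const_mul _))

lemma integral_sq_sum (hμ : IsSignMeasure μ) (s : Finset D) (a : D → ℝ) :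
    ∫ σ, (∑ J ∈ s, σ J * a J)^2 ∂μ = ∑ J ∈ s, (a J)^2 := by
  simp_rw [sq_sum_expand]
  rw [integral_finset_sum _ (fun J _ => integrable_finset_sum _
    (fun K _ => (integrable_eval_mul hμ J K).const_mul _))]
  refine Finset.sum_congr rfl fun J hJ => ?_
  rw [integral_finset_sum _ (fun K _ => (integrable_eval_mul hμ J K).const_mul _)]
  have h2 : ∀ K ∈ s, ∫ σ, (a J * a K) * (σ J * σ K) ∂μ
      = (a J * a K) * ∫ σ, σ J * σ K ∂μ := fun K _ => MeasureTheory.integral_const_mul _ _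
  rw [Finset.sum_congr rfl h2, Finset.sum_eq_single J]
  · have hsq : ∫ σ, σ J * σ J ∂μ = 1 := by
      simp_rw [← sq]; exact integral_eval_sq hμ J
    rw [hsq]; ring
  · intro K _ hne
    rw [integral_eval_mul hμ (Ne.symm hne), mul_zero]
  · intro h'; exact absurd hJ h'

end Aux3


/-- `𝔼 ‖P^{0,1}_b (P^{σ,0,1}_β φ)‖₂²
= ∑_J ⟨φ, h¹_J⟩² (β_J²/|J|) ∑_{I ⊊ J} b_I² |I|`. -/
theorem statement10 (b β : D →₀ ℝ) (μ : Measure (D → ℝ)) (hμ : IsSignMeasure μ)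
    (φ : ℝ → ℝ) (hφ : MemLp φ 2 volume) :
    ∫ σ, l2normSq (P false true b (Psig σ false true β φ)) ∂μ =
      ∑ J ∈ β.support, (ip φ (haar1 J)) ^ 2 * ((β J) ^ 2 / len J) *
        ∑ I ∈ b.support.filter (fun I => ival I ⊂ ival J), (b I) ^ 2 * len I := by
  have key1 : ∀ σ : D → ℝ, ∀ I : D,
      ip (Psig σ false true β φ) (haar1 I)
        = ∑ J ∈ β.support, σ J * (β J * ip φ (haar1 J) * ip (haar J) (haar1 I)) := by
    intro σ I
    show (∫ x, Psig σ false true β φ x * haar1 I x) = _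
    have h : ∀ x : ℝ, Psig σ false true β φ x * haar1 I x
        = ∑ J ∈ β.support, (σ J * (β J * ip φ (haar1 J))) * (haar J x * haar1 I x) := by
      intro x
      show (∑ J ∈ β.support, σ J * (β J * ip φ (haar1 J) * haar J x)) * haar1 I x = _
      rw [Finset.sum_mul]
      exact Finset.sum_congr rfl fun J _ => by ring
    simp_rw [h]
    rw [integral_finset_sum _ (fun J _ => (integrable_haar_haar1 J I).const_mul _)]
    refine Finset.sum_congr rfl fun J _ => ?_
    rw [MeasureTheory.integral_const_mul]
    show (σ J * (β J * ip φ (haar1 J))) * ip (haar J) (haar1 I) = _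
    ring
  have key2 : ∀ σ : D → ℝ,
      l2normSq (P false true b (Psig σ false true β φ))
        = ∑ I ∈ b.support, (b I * ip (Psig σ false true β φ) (haar1 I))^2 :=
    fun σ => l2normSq_sum b.support (fun I => b I * ip (Psig σ false true β φ) (haar1 I))
  have key3 : ∀ σ : D → ℝ,
      l2normSq (P false true b (Psig σ false true β φ))
        = ∑ I ∈ b.support, (b I)^2 *
            (∑ J ∈ β.support, σ J * (β J * ip φ (haar1 J) * ip (haar J) (haar1 I)))^2 := by
    intro σ
    rw [key2 σ]
    refine Finset.sum_congr rfl fun I _ => ?_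
    rw [key1 σ I, mul_pow]
  calc ∫ σ, l2normSq (P false true b (Psig σ false true β φ)) ∂μ
      = ∫ σ, ∑ I ∈ b.support, (b I)^2 *
          (∑ J ∈ β.support, σ J * (β J * ip φ (haar1 J) * ip (haar J) (haar1 I)))^2 ∂μ :=
        integral_congr_ae (Filter.Eventually.of_forall key3)
    _ = ∑ I ∈ b.support, (b I)^2 *
          ∫ σ, (∑ J ∈ β.support, σ J * (β J * ip φ (haar1 J) * ip (haar J) (haar1 I)))^2 ∂μ := by
        rw [integral_finset_sum _ (fun I _ =>
          (integrable_sq_sum hμ β.support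
            (fun J => β J * ip φ (haar1 J) * ip (haar J) (haar1 I))).const_mul _)]
        exact Finset.sum_congr rfl fun I _ => MeasureTheory.integral_const_mul _ _
    _ = ∑ I ∈ b.support, (b I)^2 *
          ∑ J ∈ β.support, (β J * ip φ (haar1 J) * ip (haar J) (haar1 I))^2 := by
        exact Finset.sum_congr rfl fun I _ => by
          rw [integral_sq_sum hμ β.support
            (fun J => β J * ip φ (haar1 J) * ip (haar J) (haar1 I))]
    _ = ∑ J ∈ β.support, ∑ I ∈ b.support,
          (b I)^2 * (β J * ip φ (haar1 J) * ip (haar J) (haar1 I))^2 := by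
        simp_rw [Finset.mul_sum]
        exact Finset.sum_comm
    _ = ∑ J ∈ β.support, (ip φ (haar1 J)) ^ 2 * ((β J) ^ 2 / len J) *
          ∑ I ∈ b.support.filter (fun I => ival I ⊂ ival J), (b I) ^ 2 * len I := by
        refine Finset.sum_congr rfl fun J _ => ?_
        rw [Finset.mul_sum, Finset.sum_filter]
        refine Finset.sum_congr rfl fun I _ => ?_
        by_cases hss : ival I ⊂ ival J
        · rw [if_pos hss, mul_pow, mul_pow, ip_haar1_sq hss]
          have hJ := (len_pos J).ne'
          field_simp
        · rw [if_neg hss, ip_haar1_zero hss]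
          ring

end RandomParaproducts
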